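/- Let X̂ be a Banach space, X_h ⊂ X̂ a complete subspace with {0} ≠ X_h ≠ X̂, and let Ĝ : X̂ → X̂ be a bounded linear projection (Ĝ² = Ĝ) with range X_h. Then ‖I − Ĝ‖ = ‖Ĝ‖, and for every x̂ ∈ X̂ and every x_h ∈ X_h one has ‖x̂ − Ĝx̂‖ = ‖(I−Ĝ)(x̂ − x_h)‖ ≤ ‖Ĝ‖ · ‖x̂ − x_h‖; in particular ‖x̂ − Ĝx̂‖ ≤ ‖Ĝ‖ · dist(x̂, X_h). -/

import Mathlib

/-!
Statement 2 (oblique projection / Kato's lemma).  `H` is a Hilbert space (as in the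
context, needed for the norm identity ‖I−Ĝ‖ = ‖Ĝ‖), `Xh` a closed subspace with
{0} ≠ X_h ≠ X̂, and `G` a bounded idempotent with range X_h.
-/

open Metric RealInnerProductSpace

set_option linter.unusedVariables false

/-- Key lemma: for a nonzero idempotent `P` on a real Hilbert space,
`‖x - P x‖ ≤ ‖P‖ * ‖x‖` for every `x`. -/
lemma norm_sub_idem_le
    {H : Type*} [NormedAddCommGroup H] [InnerProductSpace ℝ H] [CompleteSpace H]
    (P : H →L[ℝ] H) (hidem : ∀ x : H, P (P x) = P x) (hP : P ≠ 0) (x : H) :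
    ‖x - P x‖ ≤ ‖P‖ * ‖x‖ := by
  -- ‖P‖ ≥ 1
  have hP1 : 1 ≤ ‖P‖ := by
    obtain ⟨z, hz⟩ : ∃ z, P z ≠ 0 := by
      by_contra h
      push_neg at h
      exact hP (ContinuousLinearMap.ext fun z => by simp [h z])
    have h1 : ‖P z‖ ≤ ‖P‖ * ‖P z‖ := by
      calc ‖P z‖ = ‖P (P z)‖ := by rw [hidem]
        _ ≤ ‖P‖ * ‖P z‖ := P.le_opNorm _
    have hz' : 0 < ‖P z‖ := norm_pos_iff.mpr hz
    nlinarith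
  set K : Submodule ℝ H := (LinearMap.range (P : H →ₗ[ℝ] H)).topologicalClosure with hK
  haveI : CompleteSpace K := (LinearMap.range (P : H →ₗ[ℝ] H)).isClosed_topologicalClosure.completeSpace_coe
  set q : H := x - P x with hq
  have hPq : P q = 0 := by simp [hq, map_sub, hidem]
  set m : H := K.starProjection q with hm
  set v : H := q - m with hv
  have hmK : m ∈ K := K.starProjection_apply_mem q
  -- P fixes K
  have hfix : ∀ y ∈ K, P y = y := by
    intro y hy
    have hcl : IsClosed {y : H | P y = y} := isClosed_eq P.continuous continuous_id
    have hsub : (LinearMap.range (P : H →ₗ[ℝ] H) : Set H) ⊆ {y : H | P y = y} := by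
      rintro _ ⟨w, rfl⟩; exact hidem w
    have : (K : Set H) ⊆ {y : H | P y = y} := by
      rw [hK]
      exact closure_minimal hsub hcl
    exact this hy
  have hPm : P m = m := hfix m hmK
  have hPv : P v = -m := by rw [hv, map_sub, hPq, hPm, zero_sub]
  have hvm : (inner ℝ v m : ℝ) = 0 := Submodule.starProjection_inner_eq_zero (K := K) q m hmK
  have hq2 : ‖q‖ ^ 2 = ‖m‖ ^ 2 + ‖v‖ ^ 2 := by
    have : q = m + v := by rw [hv]; abel
    rw [this, norm_add_sq_real, real_inner_comm, hvm]
    ring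
  -- ‖v‖ ≤ ‖x‖
  have hvx : ‖v‖ ≤ ‖x‖ := by
    have hPx : -(P x) ∈ K := by
      have hmem : -(P x) ∈ LinearMap.range (P : H →ₗ[ℝ] H) := ⟨-x, by simp⟩
      exact (LinearMap.range (P : H →ₗ[ℝ] H)).le_topologicalClosure hmem
    have := Submodule.starProjection_minimal (U := K) q
    have hle : ‖q - m‖ ≤ ‖q - (-(P x))‖ := by
      rw [hm, this]
      exact ciInf_le ⟨0, by rintro _ ⟨w, rfl⟩; positivity⟩ (⟨-(P x), hPx⟩ : K)
    simpa [hv, hq, sub_neg_eq_add, sub_add_cancel] using hle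
  have hx0 : (0:ℝ) ≤ ‖x‖ := norm_nonneg x
  by_cases hv0 : v = 0
  · -- q ∈ K, P q = 0 and P q = q so q = 0
    have hqK : q ∈ K := by
      have hqm : q = m := by
        rw [← sub_eq_zero, ← hv]; exact hv0
      rw [hqm]; exact hmK
    have hq0 : q = 0 := by rw [← hfix q hqK, hPq]
    rw [hq0, norm_zero]
    positivity
  by_cases hm0 : m = 0
  · have : ‖q‖ = ‖v‖ := by rw [hv, hm0, sub_zero]
    calc ‖q‖ = ‖v‖ := this
      _ ≤ ‖x‖ := hvx
      _ = 1 * ‖x‖ := (one_mul _).symm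
      _ ≤ ‖P‖ * ‖x‖ := by gcongr
  · -- main case
    set a : ℝ := ‖m‖ ^ 2 with ha
    set b : ℝ := ‖v‖ ^ 2 with hb
    have ha0 : 0 < a := by
      have : ‖m‖ ≠ 0 := norm_ne_zero_iff.mpr hm0
      rw [ha]; positivity
    have hb0 : 0 < b := by
      have : ‖v‖ ≠ 0 := norm_ne_zero_iff.mpr hv0
      rw [hb]; positivity
    set y : H := v - (b / a) • m with hy
    have hPy : P y = -(1 + b / a) • m := by
      rw [hy, map_sub, map_smul, hPv, hPm]
      module
    have hny : ‖y‖ ^ 2 = b + (b / a) ^ 2 * a := by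
      have : y = v + (-(b/a)) • m := by rw [hy]; module
      rw [this, norm_add_sq_real, inner_smul_right, hvm, norm_smul, mul_pow,
        Real.norm_eq_abs, sq_abs]
      ring
    have hnPy : ‖P y‖ ^ 2 = (1 + b / a) ^ 2 * a := by
      rw [hPy, norm_smul, ha]
      rw [mul_pow]
      congr 1
      rw [Real.norm_eq_abs, sq_abs]
      ring
    have hb1 : ‖P y‖ ≤ ‖P‖ * ‖y‖ := P.le_opNorm y
    have hkey : a + b ≤ ‖P‖ ^ 2 * b := by
      have h2 : ‖P y‖ ^ 2 ≤ ‖P‖ ^ 2 * ‖y‖ ^ 2 := by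
        have h0 := pow_le_pow_left₀ (norm_nonneg (P y)) hb1 2
        rwa [mul_pow] at h0
      rw [hnPy, hny] at h2
      have hA : (1 + b/a)^2 * a = (a + b)^2 / a := by field_simp
      have hB : b + (b/a)^2 * a = b * (a + b) / a := by field_simp
      rw [hA, hB] at h2
      have hC : ‖P‖ ^ 2 * (b * (a + b) / a) = (‖P‖ ^ 2 * b * (a + b)) / a := by ring
      rw [hC, div_le_div_iff₀ ha0 ha0] at h2
      have h3 : (a + b) ^ 2 ≤ ‖P‖ ^ 2 * b * (a + b) := le_of_mul_le_mul_right h2 ha0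
      have h4 : (a + b) * (a + b) ≤ ‖P‖ ^ 2 * b * (a + b) := by
        calc (a + b) * (a + b) = (a + b) ^ 2 := (pow_two _).symm
          _ ≤ _ := h3
      exact le_of_mul_le_mul_right h4 (add_pos ha0 hb0)
    have : ‖q‖ ^ 2 ≤ (‖P‖ * ‖x‖) ^ 2 := by
      rw [hq2]
      calc a + b ≤ ‖P‖ ^ 2 * b := hkey
        _ ≤ ‖P‖ ^ 2 * ‖x‖ ^ 2 := by
            have hbx : b ≤ ‖x‖ ^ 2 := by
              rw [hb]
              exact pow_le_pow_left₀ (norm_nonneg v) hvx 2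
            exact mul_le_mul_of_nonneg_left hbx (by positivity)
        _ = (‖P‖ * ‖x‖) ^ 2 := by ring
    have hfin : ‖q‖ ≤ ‖P‖ * ‖x‖ := by
      have h1 : (0:ℝ) ≤ ‖q‖ := norm_nonneg _
      have h2 : (0:ℝ) ≤ ‖P‖ * ‖x‖ := by positivity
      exact (pow_le_pow_iff_left₀ h1 h2 (by norm_num)).mp this
    exact hfin

lemma one_le_norm_idem
    {H : Type*} [NormedAddCommGroup H] [InnerProductSpace ℝ H]
    (P : H →L[ℝ] H) (hidem : ∀ x : H, P (P x) = P x) (hP : P ≠ 0) :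
    1 ≤ ‖P‖ := by
  obtain ⟨z, hz⟩ : ∃ z, P z ≠ 0 := by
    by_contra h
    push_neg at h
    exact hP (ContinuousLinearMap.ext fun z => by simp [h z])
  have h1 : ‖P z‖ ≤ ‖P‖ * ‖P z‖ := by
    calc ‖P z‖ = ‖P (P z)‖ := by rw [hidem]
      _ ≤ ‖P‖ * ‖P z‖ := P.le_opNorm _
  have hz' : 0 < ‖P z‖ := norm_pos_iff.mpr hz
  nlinarith

theorem oblique_projection_bound
    {H : Type*} [NormedAddCommGroup H] [InnerProductSpace ℝ H] [CompleteSpace H]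
    (Xh : Submodule ℝ H) (hcl : IsClosed (Xh : Set H))
    (hbot : Xh ≠ ⊥) (htop : Xh ≠ ⊤)
    (G : H →L[ℝ] H)
    (hidem : ∀ x : H, G (G x) = G x)
    (hrange : Set.range G = (Xh : Set H)) :
    ‖ContinuousLinearMap.id ℝ H - G‖ = ‖G‖ ∧
      (∀ (x : H), ∀ xh ∈ Xh,
        ‖x - G x‖ = ‖(x - xh) - G (x - xh)‖ ∧ ‖x - G x‖ ≤ ‖G‖ * ‖x - xh‖) ∧
      (∀ x : H, ‖x - G x‖ ≤ ‖G‖ * infDist x (Xh : Set H)) := by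
  have hGfix : ∀ xh ∈ Xh, G xh = xh := by
    intro xh hxh
    have : xh ∈ Set.range G := by rw [hrange]; exact hxh
    obtain ⟨w, rfl⟩ := this
    exact hidem w
  have hG0 : G ≠ 0 := by
    intro h
    apply hbot
    rw [Submodule.eq_bot_iff]
    intro z hz
    have hz' : G z = z := hGfix z hz
    rw [h] at hz'
    simpa using hz'.symm
  set Q : H →L[ℝ] H := ContinuousLinearMap.id ℝ H - G with hQ
  have hQapp : ∀ x, Q x = x - G x := fun x => rfl
  have hQidem : ∀ x, Q (Q x) = Q x := by
    intro x
    simp only [hQapp, map_sub, hidem]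
    abel
  have hQ0 : Q ≠ 0 := by
    intro h
    apply htop
    rw [Submodule.eq_top_iff']
    intro z
    have hz : Q z = 0 := by rw [h]; rfl
    rw [hQapp] at hz
    have hz' : z = G z := (sub_eq_zero.mp hz)
    rw [hz']
    have : G z ∈ Set.range G := ⟨z, rfl⟩
    rwa [hrange] at this
  have h1 : ∀ x, ‖x - G x‖ ≤ ‖G‖ * ‖x‖ := norm_sub_idem_le G hidem hG0
  have h2 : ∀ x, ‖x - Q x‖ ≤ ‖Q‖ * ‖x‖ := norm_sub_idem_le Q hQidem hQ0
  have hnorm : ‖Q‖ = ‖G‖ := by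
    apply le_antisymm
    · apply ContinuousLinearMap.opNorm_le_bound _ (norm_nonneg G)
      intro x
      rw [hQapp]
      exact h1 x
    · apply ContinuousLinearMap.opNorm_le_bound _ (norm_nonneg Q)
      intro x
      have h2x := h2 x
      rw [hQapp, sub_sub_cancel] at h2x
      exact h2x
  have hG1 : 1 ≤ ‖G‖ := one_le_norm_idem G hidem hG0
  have hGpos : 0 < ‖G‖ := lt_of_lt_of_le one_pos hG1
  have hmain : ∀ (x : H), ∀ xh ∈ Xh,
      ‖x - G x‖ = ‖(x - xh) - G (x - xh)‖ ∧ ‖x - G x‖ ≤ ‖G‖ * ‖x - xh‖ := by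
    intro x xh hxh
    have heq : (x - xh) - G (x - xh) = x - G x := by
      rw [map_sub, hGfix xh hxh]
      abel
    refine ⟨by rw [heq], ?_⟩
    calc ‖x - G x‖ = ‖Q (x - xh)‖ := by rw [hQapp, heq]
      _ ≤ ‖Q‖ * ‖x - xh‖ := Q.le_opNorm _
      _ = ‖G‖ * ‖x - xh‖ := by rw [hnorm]
  refine ⟨hnorm, hmain, ?_⟩
  intro x
  have hne : (Xh : Set H).Nonempty := ⟨0, Xh.zero_mem⟩
  rw [← div_le_iff₀' hGpos]
  by_contra hlt
  push_neg at hlt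
  obtain ⟨y, hy, hdy⟩ := (Metric.infDist_lt_iff hne).mp hlt
  rw [dist_eq_norm] at hdy
  have hle := (hmain x y hy).2
  have hdy2 : ‖G‖ * ‖x - y‖ < ‖G‖ * (‖x - G x‖ / ‖G‖) := by
    exact mul_lt_mul_of_pos_left hdy hGpos
  rw [mul_div_cancel₀ _ (ne_of_gt hGpos)] at hdy2
  linarith
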